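/- Let {A_i}_{i=1}^m be events with P(A_i) > 0, let S_i = ∑_{j=1}^m P(A_i ∩ A_j), and let θ_i be the fractional part of S_i/P(A_i). Then P(⋃_{i=1}^m A_i) ≥ ∑_{i=1}^m ( θ_i P(A_i)² / (S_i + (1−θ_i)P(A_i)) + (1−θ_i) P(A_i)² / (S_i − θ_i P(A_i)) ). -/

import Mathlib

open MeasureTheory Filter Set

theorem kuai_alajaji_takahara_bound {Ω : Type*} [MeasurableSpace Ω] (μ : Measure Ω)
    [IsProbabilityMeasure μ] (m : ℕ) (A : Fin m → Set Ω)
    (hA : ∀ i, MeasurableSet (A i)) (hpos : ∀ i, 0 < μ (A i))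
    (S : Fin m → ℝ) (hS : ∀ i, S i = ∑ j, (μ (A i ∩ A j)).toReal)
    (θ : Fin m → ℝ) (hθ : ∀ i, θ i = Int.fract (S i / (μ (A i)).toReal)) :
    (μ (⋃ i, A i)).toReal ≥
      ∑ i, (θ i * (μ (A i)).toReal ^ 2 / (S i + (1 - θ i) * (μ (A i)).toReal) +
        (1 - θ i) * (μ (A i)).toReal ^ 2 / (S i - θ i * (μ (A i)).toReal)) := by
  classical
  set g : Ω → ℝ := fun ω => ∑ j, (A j).indicator (fun _ => (1:ℝ)) ω with hg
  have hg_meas : Measurable g := by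
    apply Finset.measurable_sum
    intro j _
    exact measurable_const.indicator (hA j)
  have hg_nat : ∀ ω, ∃ n : ℕ, g ω = n := by
    intro ω
    refine ⟨(Finset.univ.filter (fun j => ω ∈ A j)).card, ?_⟩
    simp [hg, Set.indicator_apply, Finset.sum_boole]
  have hg_nonneg : ∀ ω, 0 ≤ g ω := by
    intro ω; obtain ⟨n, hn⟩ := hg_nat ω; rw [hn]; positivity
  have hg_le : ∀ ω, g ω ≤ m := by
    intro ω
    calc g ω = ∑ j : Fin m, (A j).indicator (fun _ => (1:ℝ)) ω := rfl
      _ ≤ ∑ _j : Fin m, 1 := by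
          apply Finset.sum_le_sum; intro j _
          exact Set.indicator_le_self' (fun _ _ => zero_le_one) ω
      _ = m := by simp
  have hg_one : ∀ i : Fin m, ∀ ω ∈ A i, 1 ≤ g ω := by
    intro i ω hω
    calc (1:ℝ) = (A i).indicator (fun _ => (1:ℝ)) ω := by simp [Set.indicator_of_mem hω]
      _ ≤ g ω := Finset.single_le_sum (f := fun j => (A j).indicator (fun _ => (1:ℝ)) ω)
          (fun j _ => Set.indicator_nonneg (fun _ _ => zero_le_one) ω) (Finset.mem_univ i)
  have hinv_meas : Measurable fun ω => (g ω)⁻¹ := hg_meas.inv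
  have hbd : ∀ ω, |(g ω)⁻¹| ≤ 1 := by
    intro ω
    obtain ⟨n, hn⟩ := hg_nat ω
    rw [hn, abs_of_nonneg (by positivity)]
    rcases Nat.eq_zero_or_pos n with h | h
    · simp [h]
    · rw [inv_le_one_iff₀]; right; exact_mod_cast h
  have hbg : ∀ ω, |g ω| ≤ m := fun ω => by
    rw [abs_of_nonneg (hg_nonneg ω)]; exact hg_le ω
  have hint : ∀ (f : Ω → ℝ) (C : ℝ), Measurable f → (∀ ω, |f ω| ≤ C) → Integrable f μ := by
    intro f C hf hb
    exact (integrable_const C).mono' hf.aestronglyMeasurable (ae_of_all _ hb)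
  have hinv_int : Integrable (fun ω => (g ω)⁻¹) μ := hint _ 1 hinv_meas hbd
  have hg_int : Integrable g μ := hint _ m hg_meas hbg
  -- Step A : μ(⋃ A) = ∑ i, ∫_{A i} g⁻¹
  have key : (μ (⋃ i, A i)).toReal = ∑ i, ∫ ω in A i, (g ω)⁻¹ ∂μ := by
    have h1 : ∀ i : Fin m, ∫ ω in A i, (g ω)⁻¹ ∂μ
        = ∫ ω, (A i).indicator (fun ω => (g ω)⁻¹) ω ∂μ := by
      intro i; rw [integral_indicator (hA i)]
    rw [Finset.sum_congr rfl (fun i _ => h1 i)]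
    rw [← integral_finset_sum _ (fun i _ => hinv_int.indicator (hA i))]
    have h2 : ∀ ω, ∑ i : Fin m, (A i).indicator (fun ω => (g ω)⁻¹) ω
        = (⋃ i, A i).indicator (fun _ => (1:ℝ)) ω := by
      intro ω
      have : ∑ i : Fin m, (A i).indicator (fun ω => (g ω)⁻¹) ω
          = (∑ i : Fin m, (A i).indicator (fun _ => (1:ℝ)) ω) * (g ω)⁻¹ := by
        rw [Finset.sum_mul]
        refine Finset.sum_congr rfl (fun i _ => ?_)
        by_cases h : ω ∈ A i <;> simp [Set.indicator_apply, h]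
      rw [this]
      by_cases h : ω ∈ ⋃ i, A i
      · obtain ⟨i, hi⟩ := Set.mem_iUnion.mp h
        have hgpos : 0 < g ω := lt_of_lt_of_le zero_lt_one (hg_one i ω hi)
        rw [show (∑ i : Fin m, (A i).indicator (fun _ => (1:ℝ)) ω) = g ω from rfl,
          mul_inv_cancel₀ hgpos.ne', Set.indicator_of_mem h]
      · have : g ω = 0 := by
          rw [hg]
          apply Finset.sum_eq_zero
          intro i _
          exact Set.indicator_of_notMem (fun hi => h (Set.mem_iUnion.mpr ⟨i, hi⟩)) _
        rw [show (∑ i : Fin m, (A i).indicator (fun _ => (1:ℝ)) ω) = g ω from rfl, this,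
          zero_mul, Set.indicator_of_notMem h]
    rw [integral_congr_ae (ae_of_all _ h2), integral_indicator (MeasurableSet.iUnion (fun i => hA i)),
      setIntegral_const, smul_eq_mul, mul_one]
    rfl
  rw [key]
  apply Finset.sum_le_sum
  intro i _
  -- Step B : the per-i bound
  set P : ℝ := (μ (A i)).toReal with hP
  have hPpos : 0 < P := ENNReal.toReal_pos (hpos i).ne' (measure_ne_top μ _)
  have hind_int : ∀ j : Fin m, Integrable ((A j).indicator (fun _ => (1:ℝ))) μ := by
    intro j
    refine hint _ 1 (measurable_const.indicator (hA j)) (fun ω => ?_)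
    by_cases h : ω ∈ A j <;> simp [Set.indicator_apply, h]
  have hSint : ∫ ω in A i, g ω ∂μ = S i := by
    rw [hS, hg]
    rw [integral_finset_sum _ (fun j _ => (hind_int j).restrict)]
    refine Finset.sum_congr rfl (fun j _ => ?_)
    rw [setIntegral_indicator (hA j), setIntegral_const, smul_eq_mul, mul_one]
    rfl
  have hPS : P ≤ S i := by
    rw [hS]
    calc P = (μ (A i ∩ A i)).toReal := by rw [Set.inter_self]
      _ ≤ ∑ j, (μ (A i ∩ A j)).toReal :=
        Finset.single_le_sum (f := fun j => (μ (A i ∩ A j)).toReal)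
          (fun j _ => ENNReal.toReal_nonneg) (Finset.mem_univ i)
  set q : ℝ := S i / P with hq
  have hq1 : 1 ≤ q := (one_le_div hPpos).mpr hPS
  set k : ℤ := ⌊q⌋ with hk
  have hk1 : (1:ℤ) ≤ k := Int.le_floor.mpr (by exact_mod_cast hq1)
  have hkR : (1:ℝ) ≤ (k:ℝ) := by exact_mod_cast hk1
  have hθi : θ i = q - k := by rw [hθ]; rfl
  have hθ0 : 0 ≤ θ i := by rw [hθ]; exact Int.fract_nonneg _
  have hθlt : θ i < 1 := by rw [hθ]; exact Int.fract_lt_one _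
  have hSk : S i = P * ((k:ℝ) + θ i) := by
    rw [hθi]
    field_simp [hq]
    rw [hq, add_sub_cancel]; field_simp [hPpos.ne']
  have hkk : (0:ℝ) < (k:ℝ) * ((k:ℝ) + 1) := by nlinarith
  -- pointwise bound on A i
  have hptwise : ∀ ω ∈ A i,
      ((2*(k:ℝ)+1) - g ω) / ((k:ℝ)*((k:ℝ)+1)) ≤ (g ω)⁻¹ := by
    intro ω hω
    obtain ⟨n, hn⟩ := hg_nat ω
    have hn1 : (1:ℝ) ≤ (n:ℝ) := hn ▸ hg_one i ω hω
    have hnpos : (0:ℝ) < (n:ℝ) := lt_of_lt_of_le zero_lt_one hn1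
    have hfactor : (0:ℝ) ≤ ((n:ℝ) - k) * ((n:ℝ) - k - 1) := by
      have : (0:ℤ) ≤ ((n:ℤ) - k) * ((n:ℤ) - k - 1) := by
        exact mul_nonneg_iff.mpr (by omega)
      exact_mod_cast this
    rw [hn, inv_eq_one_div, div_le_div_iff₀ hkk hnpos]
    nlinarith
  -- integral bound
  have hlow_int : Integrable (fun ω => ((2*(k:ℝ)+1) - g ω) / ((k:ℝ)*((k:ℝ)+1))) μ :=
    ((integrable_const (2*(k:ℝ)+1)).sub hg_int).div_const _
  have hmono : ∫ ω in A i, ((2*(k:ℝ)+1) - g ω) / ((k:ℝ)*((k:ℝ)+1)) ∂μ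
      ≤ ∫ ω in A i, (g ω)⁻¹ ∂μ :=
    setIntegral_mono_on hlow_int.restrict hinv_int.restrict (hA i) hptwise
  have hlow_val : ∫ ω in A i, ((2*(k:ℝ)+1) - g ω) / ((k:ℝ)*((k:ℝ)+1)) ∂μ
      = ((2*(k:ℝ)+1) * P - S i) / ((k:ℝ)*((k:ℝ)+1)) := by
    rw [integral_div, integral_sub (integrable_const _).restrict hg_int.restrict,
      setIntegral_const, smul_eq_mul, hSint, hP]
    simp only [Measure.real]
    ring
  refine le_trans ?_ hmono
  rw [hlow_val]
  -- algebra: RHS term equals ((2k+1)P - S)/(k(k+1))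
  have hd1 : S i + (1 - θ i) * P = P * ((k:ℝ) + 1) := by rw [hSk]; ring
  have hd2 : S i - θ i * P = P * (k:ℝ) := by rw [hSk]; ring
  rw [hd1, hd2, hSk]
  have hkne : (k:ℝ) ≠ 0 := by linarith
  have hk1ne : (k:ℝ) + 1 ≠ 0 := by linarith
  refine le_of_eq ?_
  field_simp
  ring
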